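/- Let a, c, d, α, β, θ be nonnegative reals with θ > 0, and let T be the 2×2 matrix [[a, c], [a(θα+β)+β, c(θα+β)+θd+|1-θ|]]. If |a|1-θ| + θad - cβ| < 1 and c(θα + 2β) < (1-a)(1 - |1-θ| - θd), then the spectral radius of T is less than 1. -/

import Mathlib

open scoped ENNReal

lemma root_norm_lt (t δ : ℝ) (ht : 0 ≤ t) (hδ : |δ| < 1) (htd : t < 1 + δ)
    (z : ℂ) (h : z ^ 2 - (t : ℂ) * z + (δ : ℂ) = 0) : ‖z‖ < 1 := by
  obtain ⟨x, y⟩ := z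
  have hre := congrArg Complex.re h
  have him := congrArg Complex.im h
  simp [pow_two, Complex.mul_re, Complex.mul_im] at hre him
  rw [abs_lt] at hδ
  have hnorm : ‖Complex.mk x y‖ ^ 2 = x ^ 2 + y ^ 2 := by
    rw [Complex.sq_norm, Complex.normSq_mk]; ring
  have key : x ^ 2 + y ^ 2 < 1 := by
    have him' : y * (x + x - t) = 0 := by linarith [him]
    rcases mul_eq_zero.mp him' with hy | hx
    · subst hy
      have hx1 : x < 1 := by
        by_contra hge
        push_neg at hge
        nlinarith [mul_nonneg (by linarith : (0:ℝ) ≤ x - 1)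
          (by linarith : (0:ℝ) ≤ x + 1 - t)]
      have hx2 : -1 < x := by
        by_contra hle
        push_neg at hle
        nlinarith [mul_nonneg (by linarith : (0:ℝ) ≤ -1 - x)
          (by linarith : (0:ℝ) ≤ -(x - 1 - t))]
      nlinarith
    · nlinarith
  nlinarith [norm_nonneg (Complex.mk x y), hnorm, key]

theorem stmt_2 (a c d α β θ : ℝ)
    (ha : 0 ≤ a) (hc : 0 ≤ c) (hd : 0 ≤ d) (hα : 0 ≤ α) (hβ : 0 ≤ β) (hθ : 0 < θ)
    (h1 : |a * |1 - θ| + θ * a * d - c * β| < 1)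
    (h2 : c * (θ * α + 2 * β) < (1 - a) * (1 - |1 - θ| - θ * d)) :
    spectralRadius ℂ
      ((!![a, c; a * (θ * α + β) + β, c * (θ * α + β) + θ * d + |1 - θ|] :
          Matrix (Fin 2) (Fin 2) ℝ).map (algebraMap ℝ ℂ)) < 1 := by
  set M := (!![a, c; a * (θ * α + β) + β, c * (θ * α + β) + θ * d + |1 - θ|] :
      Matrix (Fin 2) (Fin 2) ℝ).map (algebraMap ℝ ℂ) with hM
  set t : ℝ := a + (c * (θ * α + β) + θ * d + |1 - θ|) with hT
  set δ : ℝ := a * |1 - θ| + θ * a * d - c * β with hD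
  have habs : 0 ≤ |1 - θ| := abs_nonneg _
  have ht : 0 ≤ t := by positivity
  have htd : t < 1 + δ := by
    have := abs_lt.mp h1
    nlinarith
  -- every spectral value has norm < 1
  have hspec : ∀ z ∈ spectrum ℂ M, ‖z‖ < 1 := by
    intro z hz
    rw [spectrum.mem_iff, Matrix.isUnit_iff_isUnit_det, isUnit_iff_ne_zero, not_ne_iff] at hz
    apply root_norm_lt t δ ht h1 htd
    rw [Matrix.det_fin_two] at hz
    simp [hM, Matrix.map_apply, Matrix.algebraMap_matrix_apply] at hz
    push_cast [hT, hD] at hz ⊢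
    ring_nf at hz ⊢
    linear_combination hz
  -- finite spectrum, take sup
  have hfin : (spectrum ℂ M).Finite := Matrix.finite_spectrum M
  rw [spectralRadius]
  have hle : (⨆ z ∈ spectrum ℂ M, (‖z‖₊ : ℝ≥0∞)) ≤
      hfin.toFinset.sup fun z => (‖z‖₊ : ℝ≥0∞) := by
    apply iSup₂_le
    intro z hz
    exact Finset.le_sup (f := fun z => (‖z‖₊ : ℝ≥0∞)) (hfin.mem_toFinset.mpr hz)
  refine lt_of_le_of_lt hle ?_
  rw [Finset.sup_lt_iff (by norm_num : (⊥ : ℝ≥0∞) < 1)]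
  intro z hz
  have := hspec z (hfin.mem_toFinset.mp hz)
  rw [← ENNReal.coe_one, ENNReal.coe_lt_coe, ← NNReal.coe_lt_coe, coe_nnnorm, NNReal.coe_one]
  exact this
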